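/- arXiv:2012.14957 — 4 statements merged into one kernel-verified Lean document; each statement's English description precedes it below -/
import Mathlib

section
/- Let E be a uniformly convex Banach space and let F be a closed linear subspace of E. Then the quotient space E/F, equipped with the quotient norm, is a uniformly convex Banach space. -/
/-- The quotient of a uniformly convex Banach space by a closed
linear subspace, equipped with the quotient norm, is a uniformly convex Banach space. -/
theorem quotient_of_uniformConvex_is_uniformConvex_banach
    {E : Type*} [NormedAddCommGroup E] [NormedSpace ℝ E] [CompleteSpace E]
    [UniformConvexSpace E] (F : Submodule ℝ E) [IsClosed (F : Set E)] :
    UniformConvexSpace (E ⧸ F) ∧ CompleteSpace (E ⧸ F) := by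
  refine ⟨⟨fun ε hε => ?_⟩, inferInstance⟩
  obtain ⟨δ, hδ, h⟩ := exists_forall_closed_ball_dist_add_le_two_sub E (half_pos hε)
  set δ' := min δ 1 with hδ'def
  have hδ'pos : 0 < δ' := lt_min hδ one_pos
  have hδ'le1 : δ' ≤ 1 := min_le_right _ _
  have hδ'leδ : δ' ≤ δ := min_le_left _ _
  refine ⟨δ' / 2, half_pos hδ'pos, fun xq hx yq hy hxy => ?_⟩
  have hη : (0 : ℝ) < δ' / 4 := by positivity
  obtain ⟨x, rfl, hxn⟩ := Submodule.Quotient.norm_mk_lt xq hη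
  obtain ⟨y, rfl, hyn⟩ := Submodule.Quotient.norm_mk_lt yq hη
  rw [hx] at hxn
  rw [hy] at hyn
  set c : ℝ := 1 + δ' / 4 with hc
  have hc0 : (0 : ℝ) < c := by positivity
  have hc2 : c ≤ 2 := by rw [hc]; linarith
  have hxc : ‖c⁻¹ • x‖ ≤ 1 := by
    rw [norm_smul, norm_inv, Real.norm_of_nonneg hc0.le, inv_mul_le_iff₀ hc0]
    linarith
  have hyc : ‖c⁻¹ • y‖ ≤ 1 := by
    rw [norm_smul, norm_inv, Real.norm_of_nonneg hc0.le, inv_mul_le_iff₀ hc0]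
    linarith
  have hsub : ε ≤ ‖x - y‖ := by
    calc ε ≤ ‖(Submodule.Quotient.mk x : E ⧸ F) - Submodule.Quotient.mk y‖ := hxy
    _ = ‖(Submodule.Quotient.mk (x - y) : E ⧸ F)‖ := by rw [Submodule.Quotient.mk_sub]
    _ ≤ ‖x - y‖ := Submodule.Quotient.norm_mk_le F (x - y)
  have hkey : ε / 2 ≤ ‖c⁻¹ • x - c⁻¹ • y‖ := by
    rw [← smul_sub, norm_smul, norm_inv, Real.norm_of_nonneg hc0.le]
    rw [le_inv_mul_iff₀ hc0]
    calc c * (ε / 2) ≤ 2 * (ε / 2) := by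
          apply mul_le_mul_of_nonneg_right hc2; linarith
    _ = ε := by ring
    _ ≤ ‖x - y‖ := hsub
  have h2 := h hxc hyc hkey
  rw [← smul_add, norm_smul, norm_inv, Real.norm_of_nonneg hc0.le,
    inv_mul_le_iff₀ hc0] at h2
  have hfinal : ‖x + y‖ ≤ 2 - δ' / 2 := by
    calc ‖x + y‖ ≤ c * (2 - δ) := h2
    _ ≤ c * (2 - δ') := by
        apply mul_le_mul_of_nonneg_left _ hc0.le; linarith
    _ ≤ 2 - δ' / 2 := by rw [hc]; nlinarith
  calc ‖(Submodule.Quotient.mk x : E ⧸ F) + Submodule.Quotient.mk y‖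
      = ‖(Submodule.Quotient.mk (x + y) : E ⧸ F)‖ := by rw [Submodule.Quotient.mk_add]
    _ ≤ ‖x + y‖ := Submodule.Quotient.norm_mk_le F (x + y)
    _ ≤ 2 - δ' / 2 := hfinal
end

section
/- Let 1 < p < ∞ and let μ be a measure on a measurable space. Then the Lebesgue space L^p(μ; ℂ) is a uniformly convex Banach space. -/
set_option maxHeartbeats 1000000

open MeasureTheory ENNReal

section PointwiseLemmas

open Real

/-- Two-point convexity bound: `‖a+b‖^r ≤ 2^(r-1) * (‖a‖^r + ‖b‖^r)`. -/
lemma lemE {r : ℝ} (hr : 1 < r) (a b : ℂ) :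
    ‖a + b‖ ^ r ≤ 2 ^ (r - 1) * (‖a‖ ^ r + ‖b‖ ^ r) := by
  have h0 : (0:ℝ) ≤ ‖a‖ := norm_nonneg a
  have h1 : (0:ℝ) ≤ ‖b‖ := norm_nonneg b
  have hmid : ((‖a‖ + ‖b‖) / 2) ^ r ≤ (‖a‖ ^ r + ‖b‖ ^ r) / 2 := by
    have := (convexOn_rpow hr.le).2 (Set.mem_Ici.2 h0) (Set.mem_Ici.2 h1)
      (by norm_num : (0:ℝ) ≤ 1/2) (by norm_num : (0:ℝ) ≤ 1/2) (by norm_num)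
    have h2 : ((1:ℝ)/2) • ‖a‖ + ((1:ℝ)/2) • ‖b‖ = (‖a‖ + ‖b‖)/2 := by
      simp [smul_eq_mul]; ring
    have h3 : ((1:ℝ)/2) • (‖a‖^r) + ((1:ℝ)/2) • (‖b‖^r) = (‖a‖^r + ‖b‖^r)/2 := by
      simp [smul_eq_mul]; ring
    rw [h2, h3] at this; exact this
  have h2 : ‖a + b‖ ^ r ≤ (‖a‖ + ‖b‖) ^ r :=
    Real.rpow_le_rpow (norm_nonneg _) (norm_add_le a b) (by positivity)
  have h3 : (‖a‖ + ‖b‖) ^ r = 2 ^ r * ((‖a‖ + ‖b‖) / 2) ^ r := by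
    rw [← Real.mul_rpow (by norm_num) (by positivity)]
    ring_nf
  calc ‖a + b‖ ^ r ≤ 2 ^ r * ((‖a‖ + ‖b‖) / 2) ^ r := by rw [← h3]; exact h2
    _ ≤ 2 ^ r * ((‖a‖ ^ r + ‖b‖ ^ r) / 2) := by
        have : (0:ℝ) < 2 ^ r := Real.rpow_pos_of_pos two_pos r
        nlinarith
    _ = 2 ^ (r - 1) * (‖a‖ ^ r + ‖b‖ ^ r) := by
        rw [Real.rpow_sub two_pos]; ring

/-- Strict midpoint inequality for distinct points. -/
lemma lemA {r : ℝ} (hr : 1 < r) {a b : ℂ} (hab : a ≠ b) :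
    (‖a + b‖ / 2) ^ r < (‖a‖ ^ r + ‖b‖ ^ r) / 2 := by
  have h0 : (0:ℝ) ≤ ‖a‖ := norm_nonneg a
  have h1 : (0:ℝ) ≤ ‖b‖ := norm_nonneg b
  rcases eq_or_ne ‖a‖ ‖b‖ with h | h
  · -- equal norms, a ≠ b, so strictly convex space gives strict triangle ineq
    have hn : ‖a + b‖ < ‖a‖ + ‖b‖ := by
      rcases lt_or_eq_of_le (norm_add_le a b) with h' | h'
      · exact h'
      · exact absurd (eq_of_norm_eq_of_norm_add_eq h h') hab
    have hpos : 0 < ‖a‖ := by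
      rcases eq_or_lt_of_le h0 with h' | h'
      · exfalso; apply hab
        have : a = 0 := norm_eq_zero.1 h'.symm
        have : b = 0 := norm_eq_zero.1 (by rw [← h, ← h']) 
        simp_all
      · exact h'
    have : ‖a + b‖ / 2 < ‖a‖ := by rw [← h] at hn; linarith
    calc (‖a + b‖ / 2) ^ r < ‖a‖ ^ r :=
          Real.rpow_lt_rpow (by positivity) this (by positivity)
      _ = (‖a‖ ^ r + ‖b‖ ^ r) / 2 := by rw [← h]; ring
  · have hstrict := (strictConvexOn_rpow hr).2 (Set.mem_Ici.2 h0) (Set.mem_Ici.2 h1) h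
      (by norm_num : (0:ℝ) < 1/2) (by norm_num : (0:ℝ) < 1/2) (by norm_num)
    have hmid : ((‖a‖ + ‖b‖) / 2) ^ r < (‖a‖ ^ r + ‖b‖ ^ r) / 2 := by
      have h2 : ((1:ℝ)/2) • ‖a‖ + ((1:ℝ)/2) • ‖b‖ = (‖a‖ + ‖b‖)/2 := by
        simp [smul_eq_mul]; ring
      have h3 : ((1:ℝ)/2) • (‖a‖^r) + ((1:ℝ)/2) • (‖b‖^r) = (‖a‖^r + ‖b‖^r)/2 := by
        simp [smul_eq_mul]; ring
      rw [h2, h3] at hstrict; exact hstrict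
    exact lt_of_le_of_lt
      (Real.rpow_le_rpow (by positivity) (by linarith [norm_add_le a b]) (by positivity)) hmid

/-- Compactness: uniform strict convexity on the "sphere". -/
lemma lemB {r η : ℝ} (hr : 1 < r) (hη : 0 < η) :
    ∃ c > 0, ∀ a b : ℂ, ‖a‖ ^ r + ‖b‖ ^ r = 1 → η ≤ ‖a - b‖ ^ r →
      (‖a + b‖ / 2) ^ r + c ≤ 1 / 2 := by
  have hcont : Continuous fun z : ℂ × ℂ => (‖z.1 + z.2‖ / 2) ^ r :=
    ((continuous_norm.comp (continuous_fst.add continuous_snd)).div_const 2).rpow_const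
      (fun _ => Or.inr (by positivity))
  have hcont1 : Continuous fun z : ℂ × ℂ => ‖z.1‖ ^ r + ‖z.2‖ ^ r :=
    ((continuous_fst.norm).rpow_const (fun _ => Or.inr (by positivity))).add
      ((continuous_snd.norm).rpow_const (fun _ => Or.inr (by positivity)))
  have hcont2 : Continuous fun z : ℂ × ℂ => ‖z.1 - z.2‖ ^ r :=
    ((continuous_fst.sub continuous_snd).norm).rpow_const (fun _ => Or.inr (by positivity))
  set K : Set (ℂ × ℂ) := {z | ‖z.1‖ ^ r + ‖z.2‖ ^ r = 1 ∧ η ≤ ‖z.1 - z.2‖ ^ r} with hK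
  have hKclosed : IsClosed K :=
    (isClosed_eq hcont1 continuous_const).inter (isClosed_le continuous_const hcont2)
  have hKbdd : Bornology.IsBounded K := by
    apply Bornology.IsBounded.subset (Metric.isBounded_closedBall (x := (0 : ℂ × ℂ)) (r := 1))
    rintro ⟨a, b⟩ ⟨h1, -⟩
    have ha : ‖a‖ ≤ 1 := by
      by_contra h
      push_neg at h
      have : (1:ℝ) < ‖a‖ ^ r := Real.one_lt_rpow_iff_of_pos (by linarith) |>.2 (Or.inl ⟨h, by linarith⟩)
      have hb : (0:ℝ) ≤ ‖b‖ ^ r := by positivity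
      linarith
    have hb : ‖b‖ ≤ 1 := by
      by_contra h
      push_neg at h
      have : (1:ℝ) < ‖b‖ ^ r := Real.one_lt_rpow_iff_of_pos (by linarith) |>.2 (Or.inl ⟨h, by linarith⟩)
      have ha' : (0:ℝ) ≤ ‖a‖ ^ r := by positivity
      linarith
    simp only [Metric.mem_closedBall, dist_zero_right, Prod.norm_def]
    exact max_le ha hb
  have hKcompact : IsCompact K := Metric.isCompact_of_isClosed_isBounded hKclosed hKbdd
  rcases K.eq_empty_or_nonempty with hKe | hKne
  · exact ⟨1, one_pos, fun a b h1 h2 => absurd (⟨h1, h2⟩ : (a,b) ∈ K)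
      (show (a,b) ∉ K by rw [hKe]; simp)⟩
  · obtain ⟨z₀, hz₀K, hz₀max⟩ := hKcompact.exists_isMaxOn hKne hcont.continuousOn
    have hne : z₀.1 ≠ z₀.2 := by
      intro h
      have : ‖z₀.1 - z₀.2‖ ^ r = 0 := by
        rw [h]; simp [Real.zero_rpow (by positivity : r ≠ 0)]
      linarith [hz₀K.2, this ▸ hz₀K.2]
    have hlt : (‖z₀.1 + z₀.2‖ / 2) ^ r < 1 / 2 := by
      have := lemA hr hne
      rw [hz₀K.1] at this; linarith
    refine ⟨1/2 - (‖z₀.1 + z₀.2‖ / 2) ^ r, by linarith, fun a b h1 h2 => ?_⟩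
    have hmem : (a, b) ∈ K := ⟨h1, h2⟩
    have : (‖a + b‖ / 2) ^ r ≤ (‖z₀.1 + z₀.2‖ / 2) ^ r := isMaxOn_iff.mp hz₀max (a,b) hmem
    linarith

lemma lemD {r η : ℝ} (hr : 1 < r) (hη : 0 < η) :
    ∃ c, 0 < c ∧ c ≤ 1 ∧ ∀ a b : ℂ,
      c * ‖a - b‖ ^ r + ‖a + b‖ ^ r ≤ (2 ^ (r - 1) + c * η) * (‖a‖ ^ r + ‖b‖ ^ r) := by
  obtain ⟨c₀, hc₀, hB⟩ := lemB (η := η) hr hη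
  have hr0 : (0:ℝ) < r := by linarith
  refine ⟨min 1 (2 * c₀), lt_min one_pos (by linarith), min_le_left _ _, fun a b => ?_⟩
  set c := min 1 (2 * c₀) with hc
  have hcpos : 0 < c := lt_min one_pos (by linarith)
  have hcle : c ≤ 2 * c₀ := min_le_right _ _
  set S := ‖a‖ ^ r + ‖b‖ ^ r with hS
  have hS0 : 0 ≤ S := by positivity
  have hEsub : ‖a - b‖ ^ r ≤ 2 ^ (r - 1) * S := by
    have := lemE hr a (-b)
    simpa [sub_eq_add_neg] using this
  have hEadd : ‖a + b‖ ^ r ≤ 2 ^ (r - 1) * S := lemE hr a b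
  have h2r : (2:ℝ) ^ r = 2 * 2 ^ (r - 1) := by
    rw [Real.rpow_sub two_pos]; ring
  have h2rpos : (0:ℝ) < 2 ^ (r-1) := Real.rpow_pos_of_pos two_pos _
  by_cases hcase : ‖a - b‖ ^ r ≤ η * S
  · have h1 : c * ‖a - b‖ ^ r ≤ c * (η * S) := by
      exact mul_le_mul_of_nonneg_left hcase hcpos.le
    nlinarith
  · push_neg at hcase
    have hSpos : 0 < S := by
      rcases eq_or_lt_of_le hS0 with h | h
      · exfalso
        have h1 : ‖a - b‖ ^ r ≤ 0 := by nlinarith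
        have h2 : (0:ℝ) ≤ ‖a - b‖ ^ r := by positivity
        nlinarith [hη, hcase]
      · exact h
    set s : ℝ := S ^ (-(1/r)) with hsdef
    have hspos : 0 < s := Real.rpow_pos_of_pos hSpos _
    have hsr : s ^ r = S⁻¹ := by
      rw [hsdef, ← Real.rpow_mul hSpos.le]
      rw [show -(1/r) * r = -1 by field_simp]
      exact Real.rpow_neg_one S
    have hnorm : ∀ v : ℂ, ‖s • v‖ ^ r = S⁻¹ * ‖v‖ ^ r := by
      intro v
      rw [norm_smul, Real.norm_of_nonneg hspos.le, Real.mul_rpow hspos.le (norm_nonneg _), hsr]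
    have h1 : ‖s • a‖ ^ r + ‖s • b‖ ^ r = 1 := by
      rw [hnorm a, hnorm b, ← mul_add, ← hS, inv_mul_cancel₀ hSpos.ne']
    have h2 : η ≤ ‖s • a - s • b‖ ^ r := by
      rw [← smul_sub, hnorm]
      rw [← div_eq_inv_mul]
      exact (le_div_iff₀ hSpos).2 (by nlinarith)
    have hball := hB (s • a) (s • b) h1 h2
    rw [← smul_add, show ‖s • (a+b)‖ / 2 = s * (‖a+b‖/2) by
        rw [norm_smul, Real.norm_of_nonneg hspos.le]; ring] at hball
    rw [Real.mul_rpow hspos.le (by positivity), hsr] at hball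
    -- hball : S⁻¹ * (‖a+b‖/2)^r + c₀ ≤ 1/2
    have hid : ‖a + b‖ ^ r = 2 ^ r * (‖a + b‖ / 2) ^ r := by
      rw [← Real.mul_rpow (by norm_num) (by positivity),
        show (2:ℝ) * (‖a+b‖/2) = ‖a+b‖ by ring]
    have hkey : ‖a + b‖ ^ r ≤ 2 ^ (r-1) * S - 2 ^ r * c₀ * S := by
      have h3 : (‖a+b‖/2)^r ≤ (1/2 - c₀) * S := by
        have := mul_le_mul_of_nonneg_left hball hSpos.le
        rw [mul_add, ← mul_assoc, mul_inv_cancel₀ hSpos.ne', one_mul] at this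
        nlinarith
      calc ‖a + b‖ ^ r = 2 ^ r * (‖a + b‖ / 2) ^ r := hid
        _ ≤ 2 ^ r * ((1/2 - c₀) * S) := by
            apply mul_le_mul_of_nonneg_left h3 (by positivity)
        _ = 2 ^ (r-1) * S - 2 ^ r * c₀ * S := by rw [h2r]; ring
    have h4 : c * ‖a - b‖ ^ r ≤ c * (2 ^ (r-1) * S) :=
      mul_le_mul_of_nonneg_left hEsub hcpos.le
    have h5 : c * (2 ^ (r-1) * S) ≤ 2 ^ r * c₀ * S := by
      rw [h2r]
      nlinarith [mul_le_mul_of_nonneg_right hcle (mul_nonneg h2rpos.le hS0)]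
    have h6 : (0:ℝ) ≤ c * η * S := by positivity
    have hgoal : (2 ^ (r-1) + c * η) * S = 2 ^ (r-1) * S + c * η * S := by ring
    linarith

end PointwiseLemmas

/-- For `1 < p < ∞`, the Lebesgue space `L^p(μ; ℂ)` is a uniformly
convex Banach space. -/
theorem Lp_uniformConvex_banach
    {α : Type*} [MeasurableSpace α] (μ : Measure α) (p : ℝ≥0∞) [Fact (1 ≤ p)]
    (hp : 1 < p) (hp' : p < ∞) :
    UniformConvexSpace (Lp ℂ p μ) ∧ CompleteSpace (Lp ℂ p μ) := by
  have hp0 : p ≠ 0 := (zero_lt_one.trans hp).ne'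
  have hpt : p ≠ ∞ := hp'.ne
  set r := p.toReal with hrdef
  have hr : 1 < r := by
    have := (ENNReal.toReal_lt_toReal (by simp) hpt).mpr hp
    simpa using this
  have hr0 : (0:ℝ) < r := by linarith
  refine ⟨⟨?_⟩, inferInstance⟩
  intro ε hε
  set ε₀ : ℝ := min ε 2 with hε₀def
  have hε₀ : 0 < ε₀ := lt_min hε two_pos
  have hε₀2 : ε₀ ≤ 2 := min_le_right _ _
  set η : ℝ := ε₀ ^ r / 4 with hηdef
  have hη : 0 < η := by positivity
  obtain ⟨c, hc0, hc1, hD⟩ := lemD (η := η) hr hη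
  set θ : ℝ := c * ε₀ ^ r / (2 * 2 ^ r) with hθdef
  have h2rpos : (0:ℝ) < 2 ^ r := Real.rpow_pos_of_pos two_pos r
  have hθpos : 0 < θ := by positivity
  have hθhalf : θ ≤ 1 / 2 := by
    rw [hθdef, div_le_iff₀ (by positivity)]
    have h1 : ε₀ ^ r ≤ 2 ^ r := Real.rpow_le_rpow hε₀.le hε₀2 hr0.le
    nlinarith
  refine ⟨2 - 2 * (1 - θ) ^ (1/r), by
    have h1 : (1 - θ) ^ (1/r) < 1 :=
      Real.rpow_lt_one (by linarith) (by linarith) (by positivity)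
    linarith, ?_⟩
  intro x hx y hy hxy
  -- lintegral machinery
  set J : Lp ℂ p μ → ℝ≥0∞ := fun h => ∫⁻ t, (‖h t‖₊ : ℝ≥0∞) ^ r ∂μ with hJdef
  have hJ : ∀ h : Lp ℂ p μ, J h = eLpNorm h p μ ^ r := by
    intro h
    rw [eLpNorm_eq_lintegral_rpow_enorm_toReal hp0 hpt, ← ENNReal.rpow_mul,
      one_div, inv_mul_cancel₀ hr0.ne', ENNReal.rpow_one]; rfl
  have hJfin : ∀ h : Lp ℂ p μ, J h ≠ ∞ := fun h => by
    rw [hJ]; exact ENNReal.rpow_ne_top_of_nonneg hr0.le (Lp.eLpNorm_ne_top h)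
  have hnorm : ∀ h : Lp ℂ p μ, eLpNorm h p μ = ENNReal.ofReal ‖h‖ := by
    intro h
    rw [Lp.norm_def, ENNReal.ofReal_toReal (Lp.eLpNorm_ne_top h)]
  have hJx : J x = 1 := by
    rw [hJ, hnorm, hx]; simp
  have hJy : J y = 1 := by
    rw [hJ, hnorm, hy]; simp
  have hJsub : ENNReal.ofReal (ε₀ ^ r) ≤ J (x - y) := by
    rw [hJ, hnorm, ← ENNReal.ofReal_rpow_of_nonneg hε₀.le hr0.le]
    refine ENNReal.rpow_le_rpow (ENNReal.ofReal_le_ofReal ?_) hr0.le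
    exact le_trans (min_le_left _ _) hxy
  have hmeas : ∀ h : Lp ℂ p μ, AEMeasurable (fun t => (‖h t‖₊ : ℝ≥0∞) ^ r) μ :=
    fun h => (Lp.aestronglyMeasurable h).enorm.pow_const r
  -- pointwise inequality in ℝ≥0∞
  set K : ℝ := 2 ^ (r - 1) + c * η with hKdef
  have hKpos : 0 < K := by
    have : (0:ℝ) < 2 ^ (r-1) := Real.rpow_pos_of_pos two_pos _
    positivity
  have hofr : ∀ v : ℂ, ((‖v‖₊ : ℝ≥0∞)) ^ r = ENNReal.ofReal (‖v‖ ^ r) := fun v => by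
    rw [← ENNReal.ofReal_rpow_of_nonneg (norm_nonneg v) hr0.le, ofReal_norm_eq_enorm]; rfl
  have hpt_ineq : ∀ a b : ℂ,
      ENNReal.ofReal c * (‖a - b‖₊ : ℝ≥0∞) ^ r + (‖a + b‖₊ : ℝ≥0∞) ^ r ≤
        ENNReal.ofReal K * ((‖a‖₊ : ℝ≥0∞) ^ r + (‖b‖₊ : ℝ≥0∞) ^ r) := by
    intro a b
    rw [hofr, hofr, hofr, hofr, ← ENNReal.ofReal_mul hc0.le, ← ENNReal.ofReal_add (by positivity)
      (by positivity), ← ENNReal.ofReal_add (by positivity) (by positivity),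
      ← ENNReal.ofReal_mul hKpos.le]
    exact ENNReal.ofReal_le_ofReal (hD a b)
  -- integrate
  have hint : ENNReal.ofReal c * J (x - y) + J (x + y) ≤ ENNReal.ofReal K * (J x + J y) := by
    rw [hJdef]
    simp only
    rw [← lintegral_const_mul' _ _ ENNReal.ofReal_ne_top,
      ← lintegral_add_left' (((hmeas (x - y)).const_mul _)),
      ← lintegral_add_left' (hmeas x),
      ← lintegral_const_mul' _ _ ENNReal.ofReal_ne_top]
    refine lintegral_mono_ae ?_
    filter_upwards [Lp.coeFn_sub x y, Lp.coeFn_add x y] with t h1 h2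
    rw [h1, h2]
    exact hpt_ineq (x t) (y t)
  have hchain : ENNReal.ofReal c * ENNReal.ofReal (ε₀ ^ r) + J (x + y) ≤
      ENNReal.ofReal K * 2 := by
    calc ENNReal.ofReal c * ENNReal.ofReal (ε₀ ^ r) + J (x + y)
        ≤ ENNReal.ofReal c * J (x - y) + J (x + y) := by
          gcongr
      _ ≤ ENNReal.ofReal K * (J x + J y) := hint
      _ = ENNReal.ofReal K * 2 := by rw [hJx, hJy]; norm_num
  -- pass to reals
  have hreal : c * ε₀ ^ r + ‖x + y‖ ^ r ≤ K * 2 := by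
    have hfin : ENNReal.ofReal K * 2 ≠ ∞ := by
      exact ENNReal.mul_ne_top ENNReal.ofReal_ne_top (by norm_num)
    have h1 := ENNReal.toReal_mono hfin hchain
    have hfin1 : ENNReal.ofReal c * ENNReal.ofReal (ε₀ ^ r) ≠ ⊤ :=
      ENNReal.mul_ne_top ENNReal.ofReal_ne_top ENNReal.ofReal_ne_top
    have hJadd : (J (x + y)).toReal = ‖x + y‖ ^ r := by
      rw [hJ, ← ENNReal.toReal_rpow, ← Lp.norm_def]
    have hε₀r : (0:ℝ) ≤ ε₀ ^ r := by positivity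
    rw [ENNReal.toReal_add hfin1 (hJfin _), ENNReal.toReal_mul,
      ENNReal.toReal_ofReal hc0.le, ENNReal.toReal_ofReal hε₀r, hJadd,
      ENNReal.toReal_mul, ENNReal.toReal_ofReal hKpos.le] at h1
    simpa using h1
  -- final arithmetic
  have h2r1 : (2:ℝ) ^ r = 2 * 2 ^ (r - 1) := by rw [Real.rpow_sub two_pos]; ring
  have hfinal : ‖x + y‖ ^ r ≤ 2 ^ r * (1 - θ) := by
    have hK2 : K * 2 = 2 ^ r + c * ε₀ ^ r / 2 := by
      rw [hKdef, hηdef, h2r1]; ring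
    have hθid : 2 ^ r * (1 - θ) = 2 ^ r - c * ε₀ ^ r / 2 := by
      rw [hθdef]; field_simp
    rw [hθid]
    rw [hK2] at hreal
    linarith
  have hxy_norm : ‖x + y‖ = (‖x + y‖ ^ r) ^ (1/r) := by
    rw [one_div, Real.rpow_rpow_inv (norm_nonneg _) hr0.ne']
  rw [hxy_norm]
  have hbound : (‖x + y‖ ^ r) ^ (1/r) ≤ (2 ^ r * (1 - θ)) ^ (1/r) :=
    Real.rpow_le_rpow (by positivity) hfinal (by positivity)
  have hsplit : ((2:ℝ) ^ r * (1 - θ)) ^ (1/r) = 2 * (1 - θ) ^ (1/r) := by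
    rw [Real.mul_rpow (by positivity) (by linarith), ← Real.rpow_mul (by norm_num),
      mul_one_div, div_self hr0.ne', Real.rpow_one]
  rw [hsplit] at hbound
  linarith
end

section
/- Every uniformly convex Banach space is reflexive, i.e. the canonical embedding of E into its bidual E** is surjective (Milman–Pettis theorem). -/
open NormedSpace Metric Filter

/-- Approximate Helly lemma: a functional on the bidual can be approximately realized by a
vector of almost the same norm, on any finite set of functionals. -/
lemma helly_approx {E : Type*} [NormedAddCommGroup E] [NormedSpace ℝ E]
    (F : StrongDual ℝ (StrongDual ℝ E)) (s : Finset (StrongDual ℝ E)) {ε : ℝ} (hε : 0 < ε) :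
    ∃ x : E, ‖x‖ ≤ ‖F‖ + ε ∧ ∀ f ∈ s, |f x - F f| ≤ ε := by
  classical
  set r : ℝ := ‖F‖ + ε with hr
  have hr0 : 0 < r := lt_of_lt_of_le hε (by simp [hr]; exact norm_nonneg F)
  set T : E →ₗ[ℝ] (s → ℝ) := LinearMap.pi (fun i => ((i : StrongDual ℝ E) : E →ₗ[ℝ] ℝ)) with hT
  set K : Set (s → ℝ) := closure (T '' closedBall 0 r) with hK
  set c : s → ℝ := fun i => F i with hc
  have hcK : c ∈ K := by
    by_contra hcK
    have hKconv : Convex ℝ K := ((convex_closedBall (0 : E) r).linear_image T).closure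
    obtain ⟨φ, u, hφK, hφc⟩ :=
      geometric_hahn_banach_closed_point hKconv isClosed_closure hcK
    -- g is the functional corresponding to φ
    set g : StrongDual ℝ E := ∑ i : s, φ (fun j => if i = j then 1 else 0) • (i : StrongDual ℝ E) with hg
    have hφ : ∀ v : s → ℝ, φ v = ∑ i : s, v i * φ (fun j => if i = j then 1 else 0) := by
      intro v
      have := LinearMap.pi_apply_eq_sum_univ (φ : (s → ℝ) →ₗ[ℝ] ℝ) v
      simpa [smul_eq_mul] using this
    have hgx : ∀ x : E, g x = φ (T x) := by
      intro x
      rw [hφ (T x), hg]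
      simp [hT, mul_comm]
    have hFg : F g = φ c := by
      rw [hφ c, hg, map_sum]
      simp [hc, mul_comm]
    have h0K : (0 : s → ℝ) ∈ K := by
      apply subset_closure
      exact ⟨0, mem_closedBall_self hr0.le, map_zero T⟩
    have hu0 : 0 < u := by simpa using hφK 0 h0K
    have hgu : ∀ x : E, ‖x‖ ≤ r → g x < u := by
      intro x hx
      rw [hgx]
      exact hφK _ (subset_closure ⟨x, by simpa using hx, rfl⟩)
    have hgnorm : ‖g‖ ≤ u / r := by
      apply ContinuousLinearMap.opNorm_le_bound _ (by positivity)
      intro x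
      rcases eq_or_ne x 0 with rfl | hx0
      · simp
      · have hxn : 0 < ‖x‖ := norm_pos_iff.2 hx0
        have h1 : g ((r / ‖x‖) • x) < u := by
          apply hgu
          rw [norm_smul, Real.norm_eq_abs, abs_of_pos (by positivity)]
          rw [div_mul_cancel₀ _ hxn.ne']
        have h2 : g ((r / ‖x‖) • (-x)) < u := by
          apply hgu
          rw [norm_smul, Real.norm_eq_abs, abs_of_pos (by positivity), norm_neg]
          rw [div_mul_cancel₀ _ hxn.ne']
        rw [map_smul, smul_eq_mul] at h1
        rw [map_smul, map_neg, smul_eq_mul] at h2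
        rw [div_mul_eq_mul_div, div_lt_iff₀ hxn] at h1
        rw [mul_neg, neg_lt, div_mul_eq_mul_div, lt_div_iff₀ hxn] at h2
        rw [Real.norm_eq_abs, div_mul_eq_mul_div, le_div_iff₀ hr0]
        rcases abs_cases (g x) with ⟨h, _⟩ | ⟨h, _⟩ <;> rw [h] <;> nlinarith
    have hFgu : u < F g := hFg ▸ hφc
    have hb : F g ≤ ‖F‖ * (u / r) :=
      le_trans (le_abs_self _) (le_trans (F.le_opNorm g) (by gcongr))
    rw [mul_div_assoc', le_div_iff₀ hr0] at hb
    have hFr : ‖F‖ < r := by simp [hr, hε]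
    have p1 : u * ‖F‖ < u * r := mul_lt_mul_of_pos_left hFr hu0
    have p2 : u * r < F g * r := mul_lt_mul_of_pos_right hFgu hr0
    linarith
  rw [Metric.mem_closure_iff] at hcK
  obtain ⟨b, hb, hdist⟩ := hcK ε hε
  obtain ⟨x, hx, rfl⟩ := hb
  refine ⟨x, by simpa using hx, fun f hf => ?_⟩
  have := dist_le_pi_dist c (T x) ⟨f, hf⟩
  have h2 : dist (c ⟨f, hf⟩) (T x ⟨f, hf⟩) < ε := lt_of_le_of_lt this hdist
  simp only [hc, hT, LinearMap.pi_apply] at h2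
  rw [Real.dist_eq] at h2
  rw [abs_sub_comm]
  exact h2.le

lemma milman_pettis_aux
    {E : Type*} [NormedAddCommGroup E] [NormedSpace ℝ E] [CompleteSpace E]
    [UniformConvexSpace E] (F : StrongDual ℝ (StrongDual ℝ E)) (hF : ‖F‖ = 1) :
    ∃ x : E, NormedSpace.inclusionInDoubleDual ℝ E x = F := by
  classical
  -- squeeze helper
  have sq : ∀ (a : ℕ → ℝ) (L : ℝ), (∀ᶠ n in atTop, |a n - L| ≤ 1/((n:ℝ)+1)) →
      Tendsto a atTop (nhds L) := by
    intro a L h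
    rw [tendsto_iff_dist_tendsto_zero]
    refine squeeze_zero' (Eventually.of_forall fun n => dist_nonneg) ?_
      tendsto_one_div_add_atTop_nhds_zero_nat
    filter_upwards [h] with n hn
    rwa [Real.dist_eq]
  -- norming functionals
  have hfex : ∀ k : ℕ, ∃ f : StrongDual ℝ E, ‖f‖ ≤ 1 ∧ 1 - 1/((k:ℝ)+1) < F f := by
    intro k
    have h1 : (1 : ℝ) - 1/((k:ℝ)+1) < ‖F‖ := by
      rw [hF]
      have : (0:ℝ) < 1/((k:ℝ)+1) := by positivity
      linarith
    obtain ⟨f, hf1, hf2⟩ := F.exists_lt_apply_of_lt_opNorm h1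
    rcases le_or_gt 0 (F f) with h | h
    · exact ⟨f, hf1.le, by rwa [Real.norm_eq_abs, abs_of_nonneg h] at hf2⟩
    · refine ⟨-f, by simpa using hf1.le, ?_⟩
      rw [map_neg]
      rwa [Real.norm_eq_abs, abs_of_neg h] at hf2
  choose f hf1 hf2 using hfex
  -- key uniform-convexity estimate
  have key : ∀ ε : ℝ, 0 < ε → ∃ N : ℕ, ∀ u v : E,
      ‖u‖ ≤ 1 + 1/((N:ℝ)+1) → ‖v‖ ≤ 1 + 1/((N:ℝ)+1) →
      2 - 4/((N:ℝ)+1) ≤ f N (u + v) → ‖u - v‖ < ε := by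
    intro ε hε
    obtain ⟨δ, hδ, hconv⟩ := exists_forall_closed_ball_dist_add_le_two_sub E (half_pos hε)
    obtain ⟨N, hN⟩ := exists_nat_gt (6/δ)
    refine ⟨N, fun u v hu hv hfuv => ?_⟩
    by_contra hcon
    push_neg at hcon
    set t : ℝ := 1/((N:ℝ)+1) with ht
    have ht0 : 0 < t := by positivity
    have ht1 : t ≤ 1 := by
      rw [ht, div_le_one (by positivity)]
      linarith [Nat.cast_nonneg (α := ℝ) N]
    have htδ : 6 * t < δ := by
      rw [div_lt_iff₀ hδ] at hN
      rw [ht, mul_one_div, div_lt_iff₀ (by positivity : (0:ℝ) < (N:ℝ)+1)]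
      nlinarith
    have hc0 : (0:ℝ) < 1 + t := by linarith
    have habs : ((1:ℝ)+t)⁻¹ = |(1+t)⁻¹| := (abs_of_pos (inv_pos.2 hc0)).symm
    have hu' : ‖(1+t)⁻¹ • u‖ ≤ 1 := by
      calc ‖(1+t)⁻¹ • u‖ = (1+t)⁻¹ * ‖u‖ := by rw [norm_smul, Real.norm_eq_abs, ← habs]
        _ ≤ (1+t)⁻¹ * (1+t) := by gcongr
        _ = 1 := inv_mul_cancel₀ hc0.ne'
    have hv' : ‖(1+t)⁻¹ • v‖ ≤ 1 := by
      calc ‖(1+t)⁻¹ • v‖ = (1+t)⁻¹ * ‖v‖ := by rw [norm_smul, Real.norm_eq_abs, ← habs]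
        _ ≤ (1+t)⁻¹ * (1+t) := by gcongr
        _ = 1 := inv_mul_cancel₀ hc0.ne'
    have hinv : ((2:ℝ))⁻¹ ≤ (1+t)⁻¹ := by
      apply inv_anti₀ hc0
      linarith
    have hsub : ε/2 ≤ ‖(1+t)⁻¹ • u - (1+t)⁻¹ • v‖ := by
      rw [← smul_sub, norm_smul, Real.norm_eq_abs, ← habs]
      have h1 : (2:ℝ)⁻¹ * ε ≤ (1+t)⁻¹ * ‖u - v‖ :=
        mul_le_mul hinv hcon hε.le (inv_nonneg.2 hc0.le)
      linarith
    have hadd := hconv hu' hv' hsub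
    rw [← smul_add, norm_smul, Real.norm_eq_abs, ← habs,
      inv_mul_le_iff₀ hc0] at hadd
    -- hadd : ‖u + v‖ ≤ (1+t) * (2 - δ)
    have h4t : 4/((N:ℝ)+1) = 4 * t := by rw [ht]; ring
    rw [h4t] at hfuv
    have hop := (f N).le_opNorm (u + v)
    rw [Real.norm_eq_abs] at hop
    have hfn1 : ‖f N‖ * ‖u + v‖ ≤ 1 * ‖u + v‖ :=
      mul_le_mul_of_nonneg_right (hf1 N) (norm_nonneg _)
    have hlow : 2 - 4 * t ≤ ‖u + v‖ :=
      le_trans hfuv (by linarith [le_abs_self (f N (u + v))])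
    nlinarith [mul_pos hδ ht0]
  -- the approximating sequence
  have hx : ∀ n : ℕ, ∃ x : E, ‖x‖ ≤ 1 + 1/((n:ℝ)+1) ∧
      ∀ k, k < n → |f k x - F (f k)| ≤ 1/((n:ℝ)+1) := by
    intro n
    obtain ⟨x, hx1, hx2⟩ := helly_approx F ((Finset.range n).image f)
      (by positivity : (0:ℝ) < 1/((n:ℝ)+1))
    exact ⟨x, by rwa [hF] at hx1,
      fun k hk => hx2 _ (Finset.mem_image_of_mem f (Finset.mem_range.2 hk))⟩
  choose x hx1 hx2 using hx
  have hmono : ∀ {m N : ℕ}, N ≤ m → 1/((m:ℝ)+1) ≤ 1/((N:ℝ)+1) := by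
    intro m N h
    apply one_div_le_one_div_of_le (by positivity)
    exact_mod_cast Nat.succ_le_succ h
  have hcauchy : CauchySeq x := by
    rw [Metric.cauchySeq_iff]
    intro ε hε
    obtain ⟨N, hN⟩ := key ε hε
    refine ⟨N + 1, fun m hm n hn => ?_⟩
    rw [dist_eq_norm]
    apply hN
    · exact le_trans (hx1 m) (by linarith [hmono (Nat.le_of_succ_le hm : N ≤ m)])
    · exact le_trans (hx1 n) (by linarith [hmono (Nat.le_of_succ_le hn : N ≤ n)])
    · have h1 := hx2 m N (by omega)
      have h2 := hx2 n N (by omega)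
      have h3 := hf2 N
      rw [abs_le] at h1 h2
      rw [map_add]
      have hm' := hmono (Nat.le_of_succ_le hm : N ≤ m)
      have hn' := hmono (Nat.le_of_succ_le hn : N ≤ n)
      have h4 : 4/((N:ℝ)+1) = 4*(1/((N:ℝ)+1)) := by ring
      rw [h4]
      linarith [h1.1, h2.1]
  obtain ⟨ξ, hξ⟩ := cauchySeq_tendsto_of_complete hcauchy
  have hξnorm : ‖ξ‖ ≤ 1 := by
    have hnorm : Tendsto (fun n => ‖x n‖) atTop (nhds ‖ξ‖) :=
      (continuous_norm.tendsto ξ).comp hξ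
    have hb : Tendsto (fun n : ℕ => 1 + 1/((n:ℝ)+1)) atTop (nhds 1) := by
      have h0 : Tendsto (fun n : ℕ => 1/((n:ℝ)+1)) atTop (nhds 0) :=
        tendsto_one_div_add_atTop_nhds_zero_nat
      have := (tendsto_const_nhds (x := (1:ℝ)) (f := atTop)).add h0
      simpa using this
    exact le_of_tendsto_of_tendsto' hnorm hb fun n => hx1 n
  have hfk : ∀ k : ℕ, f k ξ = F (f k) := by
    intro k
    have t1 : Tendsto (fun n => f k (x n)) atTop (nhds (f k ξ)) :=
      ((f k).continuous.tendsto ξ).comp hξ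
    have t2 : Tendsto (fun n => f k (x n)) atTop (nhds (F (f k))) := by
      apply sq
      filter_upwards [eventually_gt_atTop k] with n hn
      exact hx2 n k hn
    exact tendsto_nhds_unique t1 t2
  -- main pointwise identity
  have main : ∀ g : StrongDual ℝ E, ‖g‖ ≤ 1 → g ξ = F g := by
    intro g hg
    have hy : ∀ n : ℕ, ∃ y : E, ‖y‖ ≤ 1 + 1/((n:ℝ)+1) ∧
        (∀ k, k < n → |f k y - F (f k)| ≤ 1/((n:ℝ)+1)) ∧ |g y - F g| ≤ 1/((n:ℝ)+1) := by
      intro n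
      obtain ⟨y, h1, h2⟩ := helly_approx F (insert g ((Finset.range n).image f))
        (by positivity : (0:ℝ) < 1/((n:ℝ)+1))
      exact ⟨y, by rwa [hF] at h1,
        fun k hk => h2 _ (Finset.mem_insert_of_mem
          (Finset.mem_image_of_mem f (Finset.mem_range.2 hk))),
        h2 g (Finset.mem_insert_self _ _)⟩
    choose y hy1 hy2 hy3 using hy
    have hyt : Tendsto y atTop (nhds ξ) := by
      rw [Metric.tendsto_atTop]
      intro ε hε
      obtain ⟨N, hN⟩ := key ε hε
      refine ⟨N + 1, fun n hn => ?_⟩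
      rw [dist_eq_norm, ← norm_sub_rev]
      apply hN
      · refine le_trans hξnorm ?_
        have : (0:ℝ) < 1/((N:ℝ)+1) := by positivity
        linarith
      · exact le_trans (hy1 n) (by linarith [hmono (Nat.le_of_succ_le hn : N ≤ n)])
      · have h1 := hy2 n N (by omega)
        have h3 := hf2 N
        rw [abs_le] at h1
        rw [map_add, hfk N]
        have hn' := hmono (Nat.le_of_succ_le hn : N ≤ n)
        have h4 : 4/((N:ℝ)+1) = 4*(1/((N:ℝ)+1)) := by ring
        rw [h4]
        linarith [h1.1]
    have t1 : Tendsto (fun n => g (y n)) atTop (nhds (g ξ)) :=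
      (g.continuous.tendsto ξ).comp hyt
    have t2 : Tendsto (fun n => g (y n)) atTop (nhds (F g)) := by
      apply sq
      exact Eventually.of_forall fun n => hy3 n
    exact tendsto_nhds_unique t1 t2
  refine ⟨ξ, ContinuousLinearMap.ext fun g => ?_⟩
  rw [NormedSpace.dual_def]
  rcases eq_or_ne g 0 with rfl | hg0
  · simp
  · have hgn : ‖g‖ ≠ 0 := norm_ne_zero_iff.2 hg0
    have h := main (‖g‖⁻¹ • g)
      (by rw [norm_smul, norm_inv, norm_norm, inv_mul_cancel₀ hgn])
    simp only [ContinuousLinearMap.coe_smul', Pi.smul_apply, map_smul, smul_eq_mul] at h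
    exact mul_left_cancel₀ (inv_ne_zero hgn) h

/-- **Milman–Pettis**: Every uniformly convex Banach space is reflexive,
i.e. the canonical embedding of `E` into its bidual `E**` is surjective. -/
theorem milman_pettis
    {E : Type*} [NormedAddCommGroup E] [NormedSpace ℝ E] [CompleteSpace E]
    [UniformConvexSpace E] :
    Function.Surjective (NormedSpace.inclusionInDoubleDual ℝ E) := by
  intro F
  rcases eq_or_ne F 0 with rfl | hF0
  · exact ⟨0, map_zero _⟩
  · have hn : ‖F‖ ≠ 0 := fun h => hF0 ((norm_eq_zero (a := F)).1 h)
    obtain ⟨x, hx⟩ := milman_pettis_aux (‖F‖⁻¹ • F)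
      (by
        have hp : 0 < ‖F‖ := lt_of_le_of_ne (norm_nonneg F) (Ne.symm hn)
        have h1 := ContinuousLinearMap.opNorm_smul_le (‖F‖⁻¹) F
        have h2 := ContinuousLinearMap.opNorm_smul_le (‖F‖) (‖F‖⁻¹ • F)
        rw [smul_inv_smul₀ hn, Real.norm_eq_abs, abs_of_pos hp] at h2
        rw [Real.norm_eq_abs, abs_of_pos (inv_pos.2 hp), inv_mul_cancel₀ hn] at h1
        exact le_antisymm h1 (by nlinarith))
    refine ⟨‖F‖ • x, ?_⟩
    rw [map_smul, hx, smul_inv_smul₀ hn]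
end

section
/- Let E be a uniformly convex Banach space. Then the dual space E* is smooth: for every nonzero continuous linear functional f ∈ E* there exists a unique element Φ of the bidual E** with ‖Φ‖ = 1 and Φ(f) = ‖f‖. -/
set_option maxHeartbeats 1000000

open NormedSpace

/-- Key uniform convexity estimate: approximate maximizers of a nonzero functional are close. -/
lemma keyA {E : Type*} [NormedAddCommGroup E] [NormedSpace ℝ E] [UniformConvexSpace E]
    (f : StrongDual ℝ E) (hf : f ≠ 0) {ε : ℝ} (hε : 0 < ε) :
    ∃ δ > 0, ∀ u v : E, ‖u‖ ≤ 1 → ‖v‖ ≤ 1 →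
      ‖f‖ - δ ≤ f u → ‖f‖ - δ ≤ f v → ‖u - v‖ ≤ ε := by
  obtain ⟨δ, hδ, H⟩ := exists_forall_closed_ball_dist_add_le_two_sub E hε
  have hfpos : 0 < ‖f‖ := norm_pos_iff.mpr hf
  refine ⟨δ * ‖f‖ / 4, by positivity, fun u v hu hv hfu hfv => ?_⟩
  by_contra h
  push_neg at h
  have h2 : ‖u + v‖ ≤ 2 - δ := H hu hv h.le
  have h3 : f u + f v ≤ ‖f‖ * (2 - δ) := by
    calc f u + f v = f (u + v) := (map_add f u v).symm
      _ ≤ ‖f (u + v)‖ := le_abs_self _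
      _ ≤ ‖f‖ * ‖u + v‖ := f.le_opNorm _
      _ ≤ ‖f‖ * (2 - δ) := by nlinarith
  nlinarith

/-- Pick an approximate maximizer. -/
lemma approxMax {E : Type*} [NormedAddCommGroup E] [NormedSpace ℝ E]
    (f : StrongDual ℝ E) {c : ℝ} (hc : c < ‖f‖) :
    ∃ u : E, ‖u‖ ≤ 1 ∧ c < f u := by
  obtain ⟨u, hu, hcu⟩ := f.exists_lt_apply_of_lt_opNorm hc
  rcases le_or_gt 0 (f u) with h | h
  · exact ⟨u, hu.le, by rwa [Real.norm_eq_abs, abs_of_nonneg h] at hcu⟩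
  · refine ⟨-u, by simpa using hu.le, ?_⟩
    rw [map_neg]
    rwa [Real.norm_eq_abs, abs_of_neg h] at hcu

/-- In a uniformly convex Banach space every nonzero functional attains its norm. -/
lemma existsMax {E : Type*} [NormedAddCommGroup E] [NormedSpace ℝ E] [CompleteSpace E]
    [UniformConvexSpace E] (f : StrongDual ℝ E) (hf : f ≠ 0) :
    ∃ x : E, ‖x‖ = 1 ∧ f x = ‖f‖ := by
  have hfpos : 0 < ‖f‖ := norm_pos_iff.mpr hf
  -- choose a maximizing sequence
  have hseq : ∀ n : ℕ, ∃ u : E, ‖u‖ ≤ 1 ∧ ‖f‖ - 1 / (n + 1) < f u := by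
    intro n
    refine approxMax f ?_
    have : (0:ℝ) < 1 / (n + 1) := by positivity
    linarith
  choose u hu1 hu2 using hseq
  -- the sequence is Cauchy
  have hcauchy : CauchySeq u := by
    rw [Metric.cauchySeq_iff]
    intro ε hε
    obtain ⟨δ, hδ, H⟩ := keyA f hf (half_pos hε)
    obtain ⟨N, hN⟩ := exists_nat_gt (1 / δ)
    refine ⟨N, fun m hm n hn => ?_⟩
    have hkey : ∀ k : ℕ, N ≤ k → ‖f‖ - δ ≤ f (u k) := by
      intro k hk
      have h1 : 1 / ((k : ℝ) + 1) ≤ 1 / ((N : ℝ) + 1) := by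
        apply one_div_le_one_div_of_le (by positivity)
        have : (N : ℝ) ≤ k := Nat.cast_le.mpr hk
        linarith
      have h2 : 1 / ((N : ℝ) + 1) < δ := by
        rw [div_lt_iff₀ (by positivity)]
        rw [div_lt_iff₀ hδ] at hN
        nlinarith
      linarith [hu2 k]
    have := H (u m) (u n) (hu1 m) (hu1 n) (hkey m hm) (hkey n hn)
    rw [dist_eq_norm]
    linarith
  obtain ⟨x, hx⟩ := cauchySeq_tendsto_of_complete hcauchy
  have hfx : Filter.Tendsto (fun n => f (u n)) Filter.atTop (nhds (f x)) :=
    (f.continuous.tendsto x).comp hx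
  have hfx2 : f x = ‖f‖ := by
    have hub : Filter.Tendsto (fun n : ℕ => ‖f‖ - 1 / ((n : ℝ) + 1)) Filter.atTop (nhds (‖f‖ - 0)) := by
      exact Filter.Tendsto.const_sub _ tendsto_one_div_add_atTop_nhds_zero_nat
    have hle1 : f x ≤ ‖f‖ := by
      refine le_of_tendsto hfx (Filter.Eventually.of_forall fun n => ?_)
      calc f (u n) ≤ ‖f (u n)‖ := le_abs_self _
        _ ≤ ‖f‖ * ‖u n‖ := f.le_opNorm _
        _ ≤ ‖f‖ := by nlinarith [hu1 n, norm_nonneg (u n)]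
    have hle2 : ‖f‖ - 0 ≤ f x :=
      le_of_tendsto_of_tendsto hub hfx (Filter.Eventually.of_forall fun n => (hu2 n).le)
    linarith
  have hxle : ‖x‖ ≤ 1 := by
    have : Filter.Tendsto (fun n => ‖u n‖) Filter.atTop (nhds ‖x‖) :=
      (continuous_norm.tendsto x).comp hx
    exact le_of_tendsto this (Filter.Eventually.of_forall hu1)
  have hxeq : ‖x‖ = 1 := by
    have h1 : ‖f‖ ≤ ‖f‖ * ‖x‖ := by
      calc ‖f‖ = f x := hfx2.symm
        _ ≤ ‖f x‖ := le_abs_self _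
        _ ≤ ‖f‖ * ‖x‖ := f.le_opNorm _
    nlinarith
  exact ⟨x, hxeq, hfx2⟩

/-- If `E` is a uniformly convex Banach space, then the dual space `E*`
is smooth: for every nonzero continuous linear functional `f ∈ E*` there exists a unique
element `Φ` of the bidual `E**` with `‖Φ‖ = 1` and `Φ f = ‖f‖`. -/
theorem dual_of_uniformConvex_is_smooth
    {E : Type*} [NormedAddCommGroup E] [NormedSpace ℝ E] [CompleteSpace E]
    [UniformConvexSpace E] :
    ∀ f : StrongDual ℝ E, f ≠ 0 →
      ∃! Φ : StrongDual ℝ (StrongDual ℝ E), ‖Φ‖ = 1 ∧ Φ f = ‖f‖ := by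
  intro f hf
  have hfpos : 0 < ‖f‖ := norm_pos_iff.mpr hf
  obtain ⟨x, hx1, hxf⟩ := existsMax f hf
  have hJ : ∀ (y : E) (g : StrongDual ℝ E), (inclusionInDoubleDualLi ℝ y : StrongDual ℝ (StrongDual ℝ E)) g = g y :=
    fun y g => rfl
  refine ⟨inclusionInDoubleDualLi ℝ x, ⟨by rw [(inclusionInDoubleDualLi ℝ).norm_map, hx1],
    by rw [hJ, hxf]⟩, ?_⟩
  rintro Φ ⟨hΦ1, hΦ2⟩
  -- show Φ g = g x for every g
  have key : ∀ g : StrongDual ℝ E, Φ g ≤ g x := by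
    intro g
    by_contra hcon
    push_neg at hcon
    set η := (Φ g - g x) / 3 with hη
    have hηpos : 0 < η := by simp only [hη]; linarith
    have hgpos : 0 < ‖g‖ := by
      rcases eq_or_ne g 0 with rfl | hg
      · simp at hcon
      · exact norm_pos_iff.mpr hg
    obtain ⟨δ, hδ, H⟩ := keyA f hf (show (0:ℝ) < η / ‖g‖ by positivity)
    -- pick a small t
    obtain ⟨t, ht0, ht1, ht2⟩ : ∃ t : ℝ, 0 < t ∧ 2 * t * ‖g‖ + t * t ≤ δ ∧ t ≤ η := by
      refine ⟨min (δ / (2 * ‖g‖ + 1)) (min 1 η), ?_, ?_, ?_⟩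
      · positivity
      · have h1 : min (δ / (2 * ‖g‖ + 1)) (min 1 η) ≤ δ / (2 * ‖g‖ + 1) := min_le_left _ _
        have h2 : min (δ / (2 * ‖g‖ + 1)) (min 1 η) ≤ 1 := le_trans (min_le_right _ _) (min_le_left _ _)
        have h3 : (0:ℝ) < min (δ / (2 * ‖g‖ + 1)) (min 1 η) := by positivity
        set s := min (δ / (2 * ‖g‖ + 1)) (min 1 η)
        have : s * (2 * ‖g‖ + 1) ≤ δ := by
          rw [← le_div_iff₀ (by positivity)]
          exact h1
        nlinarith
      · exact le_trans (min_le_right _ _) (min_le_right _ _)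
    -- approximate maximizer for f + t • g
    obtain ⟨w, hw1, hw2⟩ := approxMax (f + t • g) (show ‖f + t • g‖ - t * t < ‖f + t • g‖ by nlinarith)
    have hwval : f w + t * g w = (f + t • g) w := by simp
    -- w is a δ-approximate maximizer of f
    have hfw : ‖f‖ - δ ≤ f w := by
      have h1 : ‖f‖ - t * ‖g‖ ≤ ‖f + t • g‖ := by
        have h0 := norm_add_le (f + t • g) (-(t • g))
        rw [add_neg_cancel_right, norm_neg] at h0
        have h2 : ‖t • g‖ = t * ‖g‖ := by
          rw [norm_smul, Real.norm_eq_abs, abs_of_pos ht0]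
        linarith
      have h3 : t * g w ≤ t * ‖g‖ := by
        have : g w ≤ ‖g‖ := by
          calc g w ≤ ‖g w‖ := le_abs_self _
            _ ≤ ‖g‖ * ‖w‖ := g.le_opNorm _
            _ ≤ ‖g‖ := by nlinarith [norm_nonneg w]
        nlinarith
      have h4 : f w = (f + t • g) w - t * g w := by rw [← hwval]; ring
      rw [h4]
      nlinarith
    -- x is a δ-approximate maximizer of f
    have hfxδ : ‖f‖ - δ ≤ f x := by rw [hxf]; linarith
    have hclose : ‖w - x‖ ≤ η / ‖g‖ := H w x hw1 hx1.le hfw hfxδ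
    have hgw : g w ≤ g x + η := by
      have h1 : g w - g x = g (w - x) := by rw [map_sub]
      have h2 : g (w - x) ≤ ‖g‖ * ‖w - x‖ := le_trans (le_abs_self _) (g.le_opNorm _)
      have h3 : ‖g‖ * ‖w - x‖ ≤ ‖g‖ * (η / ‖g‖) := by nlinarith
      have h4 : ‖g‖ * (η / ‖g‖) = η := by field_simp
      linarith
    -- derivative estimate: Φ g ≤ g w + t
    have hΦg : t * Φ g ≤ ‖f + t • g‖ - ‖f‖ := by
      have h1 : Φ (f + t • g) ≤ ‖f + t • g‖ := by
        calc Φ (f + t • g) ≤ ‖Φ (f + t • g)‖ := le_abs_self _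
          _ ≤ ‖Φ‖ * ‖f + t • g‖ := Φ.le_opNorm _
          _ = ‖f + t • g‖ := by rw [hΦ1, one_mul]
      have h2 : Φ (f + t • g) = Φ f + t * Φ g := by simp
      rw [h2, hΦ2] at h1
      linarith
    have hub : ‖f + t • g‖ - ‖f‖ ≤ t * g w + t * t := by
      have h1 : ‖f + t • g‖ ≤ (f + t • g) w + t * t := by linarith
      have h2 : f w ≤ ‖f‖ := by
        calc f w ≤ ‖f w‖ := le_abs_self _
          _ ≤ ‖f‖ * ‖w‖ := f.le_opNorm _
          _ ≤ ‖f‖ := by nlinarith [norm_nonneg w]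
      rw [← hwval] at h1
      linarith
    -- combine: Φ g ≤ g w + t ≤ g x + η + η = g x + 2η < Φ g
    have hfinal : Φ g ≤ g x + 2 * η := by
      have : t * Φ g ≤ t * g w + t * t := by linarith
      have h5 : Φ g ≤ g w + t := by nlinarith
      linarith
    simp only [hη] at hfinal
    linarith
  have key2 : ∀ g : StrongDual ℝ E, Φ g = g x := by
    intro g
    have h1 := key g
    have h2 := key (-g)
    simp only [map_neg, ContinuousLinearMap.neg_apply] at h2
    linarith
  ext g
  rw [hJ]
  exact key2 g
end
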